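/- Consider any assignment matrix A ∈ ℝ^{n×m} and any (possibly randomized) decoding scheme that, when each machine straggles independently with probability p, produces an α ∈ ℝ^n such that α_i = 0 whenever all machines holding block i straggle, and E[α] = 𝟙. If block i is held by d_i machines and Σ_i d_i ≤ dn, then (1/n)E[|α − 𝟙|₂²] ≥ p^d/(1 − p^d). -/

import Mathlib

open MeasureTheory ProbabilityTheory Finset

/-- Per-coordinate bound: if `X = 0` on an event of measure `q` and `E[X] = 1`, then
`E[(X-1)^2] ≥ q/(1-q)`. -/
private lemma stmt10_coord {Ω : Type*} [MeasurableSpace Ω] (μ : Measure Ω)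
    [IsProbabilityMeasure μ]
    (E : Set Ω) (hE : MeasurableSet E) (q : ℝ) (hq0 : 0 < q) (hq1 : q < 1)
    (hqE : μ E = ENNReal.ofReal q)
    (X : Ω → ℝ) (hX : Measurable X) (hXint : Integrable X μ)
    (hXE : ∀ ω ∈ E, X ω = 0) (hX1 : ∫ ω, X ω ∂μ = 1) :
    ENNReal.ofReal (q / (1 - q)) ≤ ∫⁻ ω, ENNReal.ofReal ((X ω - 1) ^ 2) ∂μ := by
  by_cases hfin : ∫⁻ ω, ENNReal.ofReal ((X ω - 1) ^ 2) ∂μ = ⊤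
  · rw [hfin]; exact le_top
  have h1q : (0:ℝ) < 1 - q := by linarith
  have hYmeas : Measurable fun ω => (X ω - 1) ^ 2 := (hX.sub measurable_const).pow_const 2
  have hYnn : 0 ≤ᵐ[μ] fun ω => (X ω - 1) ^ 2 := Filter.Eventually.of_forall fun ω => sq_nonneg _
  have hYint : Integrable (fun ω => (X ω - 1) ^ 2) μ := by
    refine ⟨hYmeas.aestronglyMeasurable, ?_⟩
    rw [hasFiniteIntegral_iff_ofReal hYnn]
    exact lt_top_iff_ne_top.2 hfin
  rw [← ofReal_integral_eq_lintegral_ofReal hYint hYnn]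
  apply ENNReal.ofReal_le_ofReal
  have hμE : (μ E).toReal = q := by rw [hqE, ENNReal.toReal_ofReal hq0.le]
  have hμF : (μ Eᶜ).toReal = 1 - q := by
    rw [measure_compl hE (measure_ne_top μ E), measure_univ, hqE, ← ENNReal.ofReal_one,
      ← ENNReal.ofReal_sub _ hq0.le, ENNReal.toReal_ofReal h1q.le]
  have hZint : Integrable (fun ω => X ω - 1) μ := hXint.sub (integrable_const 1)
  have hZ : ∫ ω, (X ω - 1) ∂μ = 0 := by
    rw [integral_sub hXint (integrable_const 1), hX1, integral_const]
    simp
  have hZE : ∫ ω in E, (X ω - 1) ∂μ = -q := by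
    rw [setIntegral_congr_fun hE (fun ω hω => by simp [hXE ω hω] :
        Set.EqOn (fun ω => X ω - 1) (fun _ => (-1:ℝ)) E),
      setIntegral_const, measureReal_def, hμE, smul_eq_mul]
    ring
  have hZF : ∫ ω in Eᶜ, (X ω - 1) ∂μ = q := by
    have h := integral_add_compl hE hZint
    rw [hZE, hZ] at h
    linarith
  have hYE : ∫ ω in E, (X ω - 1) ^ 2 ∂μ = q := by
    rw [setIntegral_congr_fun hE (fun ω hω => by simp [hXE ω hω] :
        Set.EqOn (fun ω => (X ω - 1) ^ 2) (fun _ => (1:ℝ)) E),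
      setIntegral_const, measureReal_def, hμE, smul_eq_mul, mul_one]
  obtain ⟨c, hc⟩ : ∃ c : ℝ, c = q / (1 - q) := ⟨_, rfl⟩
  have h0 : 0 ≤ ∫ ω in Eᶜ, (X ω - 1 - c) ^ 2 ∂μ :=
    integral_nonneg fun ω => sq_nonneg _
  have heq : ∫ ω in Eᶜ, (X ω - 1 - c) ^ 2 ∂μ
      = (∫ ω in Eᶜ, (X ω - 1) ^ 2 ∂μ) - 2 * c * q + c ^ 2 * (1 - q) := by
    have hexp : (fun ω => (X ω - 1 - c) ^ 2)
        = fun ω => (X ω - 1) ^ 2 - (2 * c) * (X ω - 1) + c ^ 2 := by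
      funext ω; ring
    have hi2 : Integrable (fun ω => 2 * c * (X ω - 1)) (μ.restrict Eᶜ) :=
      hZint.restrict.const_mul _
    have hi1 : Integrable (fun ω => (X ω - 1) ^ 2 - 2 * c * (X ω - 1)) (μ.restrict Eᶜ) :=
      hYint.restrict.sub hi2
    rw [hexp, integral_add hi1 (integrable_const _), integral_sub hYint.restrict hi2,
      integral_const_mul, hZF, setIntegral_const, measureReal_def, hμF, smul_eq_mul]
    ring
  have hYF : q ^ 2 / (1 - q) ≤ ∫ ω in Eᶜ, (X ω - 1) ^ 2 ∂μ := by
    have hval : 2 * c * q - c ^ 2 * (1 - q) = q ^ 2 / (1 - q) := by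
      rw [hc]; field_simp; ring
    linarith [heq ▸ h0]
  have htot : ∫ ω, (X ω - 1) ^ 2 ∂μ = q + ∫ ω in Eᶜ, (X ω - 1) ^ 2 ∂μ := by
    rw [← integral_add_compl hE hYint, hYE]
  have hfinal : q / (1 - q) = q + q ^ 2 / (1 - q) := by
    field_simp; ring
  rw [htot, hfinal]
  linarith

/-- Sum inequality: with `cᵢ ≥ 1`, `∑ cᵢ ≤ d n`, we have
`∑ p^{cᵢ}/(1-p^{cᵢ}) ≥ n p^d/(1-p^d)` (convexity via AM–GM and Cauchy–Schwarz). -/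
private lemma stmt10_sum (n d : ℕ) (hn : 0 < n) (hd : 0 < d)
    (p : ℝ) (hp0 : 0 < p) (hp1 : p < 1)
    (c : Fin n → ℕ) (hc : ∀ i, 1 ≤ c i) (hload : ∑ i, c i ≤ d * n) :
    (n : ℝ) * (p ^ d / (1 - p ^ d)) ≤ ∑ i, p ^ c i / (1 - p ^ c i) := by
  have hn' : (0:ℝ) < n := by exact_mod_cast hn
  have hq0 : ∀ i, (0:ℝ) < p ^ c i := fun i => pow_pos hp0 _
  have hq1 : ∀ i : Fin n, p ^ c i < 1 := fun i =>
    pow_lt_one₀ hp0.le hp1 (by have := hc i; omega)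
  have hpd0 : (0:ℝ) < p ^ d := pow_pos hp0 d
  have hpd1 : p ^ d < 1 := pow_lt_one₀ hp0.le hp1 hd.ne'
  -- AM–GM: n * p^d ≤ ∑ p^{cᵢ}
  have hS : (n:ℝ) * p ^ d ≤ ∑ i, p ^ c i := by
    have hw : ∑ _i : Fin n, (1 / n : ℝ) = 1 := by
      rw [Finset.sum_const, Finset.card_univ, Fintype.card_fin, nsmul_eq_mul]
      field_simp
    have hgm := Real.geom_mean_le_arith_mean_weighted Finset.univ (fun _ => (1 / n : ℝ))
      (fun i => p ^ c i) (fun i _ => by positivity) hw (fun i _ => (hq0 i).le)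
    have h1 : ∀ i : Fin n, ((p:ℝ) ^ c i) ^ (1 / n : ℝ)
        = Real.exp (Real.log p * ((c i : ℝ) / n)) := fun i => by
      rw [← Real.rpow_natCast p (c i), ← Real.rpow_mul hp0.le, Real.rpow_def_of_pos hp0,
        mul_one_div]
    have hprod : ∏ i : Fin n, ((p:ℝ) ^ c i) ^ (1 / n : ℝ)
        = p ^ (((∑ i, (c i : ℝ)) / n) : ℝ) := by
      simp_rw [h1]
      rw [← Real.exp_sum, Real.rpow_def_of_pos hp0]
      congr 1
      simp_rw [← mul_div_assoc]
      rw [← Finset.sum_div, ← Finset.mul_sum, mul_div_assoc]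
    have hexp : p ^ ((d : ℝ) : ℝ) ≤ p ^ (((∑ i, (c i : ℝ)) / n) : ℝ) := by
      apply Real.rpow_le_rpow_of_exponent_ge hp0 hp1.le
      rw [div_le_iff₀ hn']
      calc ∑ i, (c i : ℝ) = ((∑ i, c i : ℕ) : ℝ) := by push_cast; ring
        _ ≤ ((d * n : ℕ) : ℝ) := by exact_mod_cast hload
        _ = (d : ℝ) * n := by push_cast; ring
    have hchain : p ^ d ≤ (1 / n : ℝ) * ∑ i, p ^ c i := by
      calc p ^ d = p ^ ((d : ℝ) : ℝ) := (Real.rpow_natCast p d).symm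
        _ ≤ ∏ i : Fin n, ((p:ℝ) ^ c i) ^ (1 / n : ℝ) := by rw [hprod]; exact hexp
        _ ≤ ∑ i : Fin n, (1 / n : ℝ) * p ^ c i := hgm
        _ = (1 / n : ℝ) * ∑ i, p ^ c i := by rw [Finset.mul_sum]
    calc (n:ℝ) * p ^ d ≤ (n:ℝ) * ((1 / n : ℝ) * ∑ i, p ^ c i) :=
          mul_le_mul_of_nonneg_left hchain hn'.le
      _ = ∑ i, p ^ c i := by field_simp
  set S : ℝ := ∑ i, p ^ c i with hSdef
  have hSn : S < (n:ℝ) := by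
    have : S ≤ ∑ _i : Fin n, p := by
      apply Finset.sum_le_sum
      intro i _
      calc p ^ c i ≤ p ^ 1 := pow_le_pow_of_le_one hp0.le hp1.le (hc i)
        _ = p := pow_one p
    rw [Finset.sum_const, Finset.card_univ, Fintype.card_fin, nsmul_eq_mul] at this
    nlinarith
  -- Cauchy–Schwarz (AM–HM)
  have hCS : (n:ℝ) ^ 2 ≤ ((n:ℝ) - S) * ∑ i, 1 / (1 - p ^ c i) := by
    have h := Finset.sum_mul_sq_le_sq_mul_sq Finset.univ
      (fun i : Fin n => Real.sqrt (1 - p ^ c i))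
      (fun i : Fin n => 1 / Real.sqrt (1 - p ^ c i))
    have hmul : ∀ i : Fin n, Real.sqrt (1 - p ^ c i) * (1 / Real.sqrt (1 - p ^ c i)) = 1 := by
      intro i
      have : Real.sqrt (1 - p ^ c i) ≠ 0 :=
        ne_of_gt (Real.sqrt_pos.2 (by linarith [hq1 i]))
      field_simp
    have hsq1 : ∀ i : Fin n, Real.sqrt (1 - p ^ c i) ^ 2 = 1 - p ^ c i := fun i =>
      Real.sq_sqrt (by linarith [hq1 i])
    have hsq2 : ∀ i : Fin n, (1 / Real.sqrt (1 - p ^ c i)) ^ 2 = 1 / (1 - p ^ c i) := by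
      intro i
      rw [div_pow, one_pow, hsq1 i]
    simp_rw [hmul, hsq1, hsq2] at h
    rw [Finset.sum_const, Finset.card_univ, Fintype.card_fin, nsmul_eq_mul, mul_one] at h
    have hsub : ∑ i : Fin n, (1 - p ^ c i) = (n:ℝ) - S := by
      rw [Finset.sum_sub_distrib, Finset.sum_const, Finset.card_univ, Fintype.card_fin,
        nsmul_eq_mul, mul_one, hSdef]
    rwa [hsub] at h
  have hnS : (0:ℝ) < (n:ℝ) - S := by linarith
  have h1pd : (0:ℝ) < 1 - p ^ d := by linarith
  have hT : (n:ℝ) / (1 - p ^ d) ≤ ∑ i, 1 / (1 - p ^ c i) := by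
    rw [div_le_iff₀ h1pd]
    nlinarith [hCS, hS, mul_pos hnS h1pd]
  have hsum : ∑ i, p ^ c i / (1 - p ^ c i) = (∑ i, 1 / (1 - p ^ c i)) - n := by
    have hpt : ∀ i : Fin n, p ^ c i / (1 - p ^ c i) = 1 / (1 - p ^ c i) - 1 := by
      intro i
      have h' : (1:ℝ) - p ^ c i ≠ 0 := by linarith [hq1 i]
      field_simp
      ring
    rw [Finset.sum_congr rfl fun i _ => hpt i, Finset.sum_sub_distrib, Finset.sum_const,
      Finset.card_univ, Fintype.card_fin, nsmul_eq_mul, mul_one]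
  have hfin2 : (n:ℝ) * (p ^ d / (1 - p ^ d)) = (n:ℝ) / (1 - p ^ d) - n := by
    field_simp
    ring
  linarith

/-- For any assignment of `n` data blocks to `m` machines (block `i` held
by the `dᵢ` machines in `holds i`, with `Σᵢ dᵢ ≤ d n`), and any decoding scheme producing
`α` with `αᵢ = 0` whenever all machines holding block `i` straggle and `E[α] = 𝟙` under
i.i.d. Bernoulli(p) stragglers, we have `(1/n) E[|α - 𝟙|₂²] ≥ p^d/(1 - p^d)`. -/
theorem stmt10 {Ω : Type*} [MeasurableSpace Ω] (μ : Measure Ω) [IsProbabilityMeasure μ]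
    (n m d : ℕ) (hn : 0 < n) (hd : 0 < d)
    (p : ℝ) (hp0 : 0 < p) (hp1 : p < 1)
    (B : Fin m → Ω → Bool) (hBmeas : ∀ j, Measurable (B j))
    (hindep : iIndepFun B μ)
    (hBp : ∀ j, μ (B j ⁻¹' {true}) = ENNReal.ofReal p)
    (holds : Fin n → Finset (Fin m))
    (hload : ∑ i, (holds i).card ≤ d * n)
    (α : Ω → Fin n → ℝ) (hαmeas : Measurable α)
    (hzero : ∀ ω i, (∀ j ∈ holds i, B j ω = true) → α ω i = 0)
    (hint : ∀ i, Integrable (fun ω => α ω i) μ)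
    (hunbiased : ∀ i, ∫ ω, α ω i ∂μ = 1) :
    ENNReal.ofReal (p ^ d / (1 - p ^ d))
      ≤ (∑ i, ∫⁻ ω, ENNReal.ofReal ((α ω i - 1) ^ 2) ∂μ) / n := by
  classical
  have hc1 : ∀ i, 1 ≤ (holds i).card := by
    intro i
    by_contra h
    have hempty : holds i = ∅ := by
      rw [← Finset.card_eq_zero]; omega
    have hzero' : ∫ ω, α ω i ∂μ = 0 := by
      have hz : ∀ ω, α ω i = 0 := fun ω => hzero ω i (by simp [hempty])
      simp [hz]
    rw [hunbiased i] at hzero'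
    norm_num at hzero'
  have hEmeas : ∀ i, MeasurableSet (⋂ j ∈ holds i, B j ⁻¹' {true}) := fun i =>
    MeasurableSet.biInter (holds i).countable_toSet
      (fun j _ => (hBmeas j) (measurableSet_singleton true))
  have hE : ∀ i, μ (⋂ j ∈ holds i, B j ⁻¹' {true}) = ENNReal.ofReal (p ^ (holds i).card) := by
    intro i
    rw [hindep.measure_inter_preimage_eq_mul (holds i)
      (sets := fun _ => ({true} : Set Bool)) (fun j _ => measurableSet_singleton true)]
    rw [Finset.prod_congr rfl fun j _ => hBp j, Finset.prod_const,
      ← ENNReal.ofReal_pow hp0.le]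
  have key : ∀ i, ENNReal.ofReal (p ^ (holds i).card / (1 - p ^ (holds i).card))
      ≤ ∫⁻ ω, ENNReal.ofReal ((α ω i - 1) ^ 2) ∂μ := by
    intro i
    refine stmt10_coord μ _ (hEmeas i) _ (pow_pos hp0 _)
      (pow_lt_one₀ hp0.le hp1 (by have := hc1 i; omega)) (hE i)
      (fun ω => α ω i) ((measurable_pi_apply i).comp hαmeas) (hint i) ?_ (hunbiased i)
    intro ω hω
    apply hzero ω i
    intro j hj
    have := Set.mem_iInter₂.1 hω j hj
    simpa using this
  have hsum1 : ENNReal.ofReal ((n:ℝ) * (p ^ d / (1 - p ^ d)))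
      ≤ ∑ i, ∫⁻ ω, ENNReal.ofReal ((α ω i - 1) ^ 2) ∂μ := by
    calc ENNReal.ofReal ((n:ℝ) * (p ^ d / (1 - p ^ d)))
        ≤ ENNReal.ofReal (∑ i, p ^ (holds i).card / (1 - p ^ (holds i).card)) :=
          ENNReal.ofReal_le_ofReal
            (stmt10_sum n d hn hd p hp0 hp1 (fun i => (holds i).card) hc1 hload)
      _ = ∑ i, ENNReal.ofReal (p ^ (holds i).card / (1 - p ^ (holds i).card)) := by
          refine ENNReal.ofReal_sum_of_nonneg fun i _ => div_nonneg (pow_pos hp0 _).le ?_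
          have := pow_lt_one₀ hp0.le hp1 (by have := hc1 i; omega : (holds i).card ≠ 0)
          linarith
      _ ≤ ∑ i, ∫⁻ ω, ENNReal.ofReal ((α ω i - 1) ^ 2) ∂μ :=
          Finset.sum_le_sum fun i _ => key i
  rw [ENNReal.le_div_iff_mul_le (Or.inl (Nat.cast_ne_zero.2 hn.ne'))
    (Or.inl (ENNReal.natCast_ne_top n))]
  calc ENNReal.ofReal (p ^ d / (1 - p ^ d)) * n
      = ENNReal.ofReal ((n:ℝ) * (p ^ d / (1 - p ^ d))) := by
        rw [ENNReal.ofReal_mul (by positivity : (0:ℝ) ≤ (n:ℝ)), ENNReal.ofReal_natCast,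
          mul_comm]
    _ ≤ _ := hsum1
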